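/- Well-posedness with interface unknowns and coarse-flux/fine-pressure matching: augment the one-dimensional composite finite volume scheme with additional interface unknowns p_{I+1/2}^{n,k} and p_{I+1/2}^{n}, interface fluxes u_{I+1/2}^{n,k} = (p_{I+1/2}^{n,k} − p_I^{n,k})/(x_{I+1/2} − x_I) and u_{I+1/2}^{n} = (p_{I+1}^{n} − p_{I+1/2}^{n})/(x_{I+1} − x_{I+1/2}), and interface conditions, for every n: δt₂ u_{I+1/2}^{n} = Σ_{k=1}^{𝒦} δt₁ u_{I+1/2}^{n,k} and p_{I+1/2}^{n,k} = p_{I+1/2}^{n} for all k. Then for every choice of sources f_j^{n,k}, f_j^{n} and initial values p_j^0, the resulting finite linear system has exactly one solution (p_j^{n,k} for j ≤ I, p_j^{n} for j > I, p_{I+1/2}^{n,k}, p_{I+1/2}^{n}). -/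

import Mathlib

open Finset

/-- Cell center `x_j = (x_{j-1/2} + x_{j+1/2})/2`, where `xh j` denotes `x_{j+1/2}`
(so `xh 0 = x_{1/2}`, …, `xh J = x_{J+1/2}`). -/
noncomputable def xc (xh : ℕ → ℝ) (j : ℕ) : ℝ := (xh (j - 1) + xh j) / 2

/-- Cell width `h_j = x_{j+1/2} − x_{j−1/2}`. -/
noncomputable def hw (xh : ℕ → ℝ) (j : ℕ) : ℝ := xh j - xh (j - 1)

/-- The previous fine-time value `p_j^{n,k−1}`, with the conventions
`p_j^{n,0} = p_j^{n−1,𝒦}` and `p_j^{1,0} = p_j^0`. -/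
def prevF (K : ℕ) (p0 : ℕ → ℝ) (p1 : ℕ → ℕ → ℕ → ℝ) (n k j : ℕ) : ℝ :=
  if k = 1 then (if n = 1 then p0 j else p1 (n - 1) K j) else p1 n (k - 1) j

/-- The previous coarse-time value `p_j^{n−1}`, with the convention `p_j^0 = p_j^0`. -/
def prevC (p0 : ℕ → ℝ) (p2 : ℕ → ℕ → ℝ) (n j : ℕ) : ℝ :=
  if n = 1 then p0 j else p2 (n - 1) j

/-- Fine fluxes `u_{j+1/2}^{n,k}` for face indices `j = 0,…,I`:
`u_{1/2}^{n,k} = p_1^{n,k}/(x_1 − x_{1/2})`,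
`u_{j+1/2}^{n,k} = (p_{j+1}^{n,k} − p_j^{n,k})/(x_{j+1} − x_j)` for `1 ≤ j < I`, and the
interface flux `u_{I+1/2}^{n,k} = (p_{I+1/2}^{n,k} − p_I^{n,k})/(x_{I+1/2} − x_I)`,
where `q1 n k` denotes the interface unknown `p_{I+1/2}^{n,k}`. -/
noncomputable def uF (I : ℕ) (xh : ℕ → ℝ) (p1 : ℕ → ℕ → ℕ → ℝ) (q1 : ℕ → ℕ → ℝ)
    (n k j : ℕ) : ℝ :=
  if j = 0 then p1 n k 1 / (xc xh 1 - xh 0)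
  else if j < I then (p1 n k (j + 1) - p1 n k j) / (xc xh (j + 1) - xc xh j)
  else (q1 n k - p1 n k I) / (xh I - xc xh I)

/-- Coarse fluxes `u_{j+1/2}^{n}` for face indices `j = I,…,J`:
the interface flux `u_{I+1/2}^{n} = (p_{I+1}^{n} − p_{I+1/2}^{n})/(x_{I+1} − x_{I+1/2})`
(where `q2 n` denotes the interface unknown `p_{I+1/2}^{n}`),
`u_{j+1/2}^{n} = (p_{j+1}^{n} − p_j^{n})/(x_{j+1} − x_j)` for `I < j < J`, and
`u_{J+1/2}^{n} = −p_J^{n}/(x_{J+1/2} − x_J)`. -/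
noncomputable def uC (I J : ℕ) (xh : ℕ → ℝ) (p2 : ℕ → ℕ → ℝ) (q2 : ℕ → ℝ)
    (n j : ℕ) : ℝ :=
  if j = J then -(p2 n J) / (xh J - xc xh J)
  else if I < j then (p2 n (j + 1) - p2 n j) / (xc xh (j + 1) - xc xh j)
  else (p2 n (I + 1) - q2 n) / (xc xh (I + 1) - xh I)

/-- The interior scheme equations of the one-dimensional composite finite volume scheme:
`(h_j/δt₁)(p_j^{n,k} − p_j^{n,k−1}) − (u_{j+1/2}^{n,k} − u_{j−1/2}^{n,k}) = h_j f_j^{n,k}`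
for `j = 1,…,I`, `n = 1,…,N₂`, `k = 1,…,𝒦`, and
`(h_j/δt₂)(p_j^{n} − p_j^{n−1}) − (u_{j+1/2}^{n} − u_{j−1/2}^{n}) = h_j f_j^{n}`
for `j = I+1,…,J`, `n = 1,…,N₂`. -/
def SchemeEqs (J I K N2 : ℕ) (δt1 δt2 : ℝ) (xh : ℕ → ℝ)
    (p0 : ℕ → ℝ) (f1 : ℕ → ℕ → ℕ → ℝ) (f2 : ℕ → ℕ → ℝ)
    (p1 : ℕ → ℕ → ℕ → ℝ) (p2 : ℕ → ℕ → ℝ) (q1 : ℕ → ℕ → ℝ) (q2 : ℕ → ℝ) : Prop :=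
  (∀ n ∈ Icc 1 N2, ∀ k ∈ Icc 1 K, ∀ j ∈ Icc 1 I,
      (hw xh j / δt1) * (p1 n k j - prevF K p0 p1 n k j)
        - (uF I xh p1 q1 n k j - uF I xh p1 q1 n k (j - 1)) = hw xh j * f1 n k j)
  ∧ (∀ n ∈ Icc 1 N2, ∀ j ∈ Icc (I + 1) J,
      (hw xh j / δt2) * (p2 n j - prevC p0 p2 n j)
        - (uC I J xh p2 q2 n j - uC I J xh p2 q2 n (j - 1)) = hw xh j * f2 n j)

/-- Interface conditions with interface unknowns and coarse-flux/fine-pressure matching: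
`δt₂ u_{I+1/2}^{n} = ∑_{k=1}^{𝒦} δt₁ u_{I+1/2}^{n,k}` and
`p_{I+1/2}^{n,k} = p_{I+1/2}^{n}` for all `k`. -/
def InterfaceCoarseFlux (J I K N2 : ℕ) (δt1 δt2 : ℝ) (xh : ℕ → ℝ)
    (p1 : ℕ → ℕ → ℕ → ℝ) (p2 : ℕ → ℕ → ℝ) (q1 : ℕ → ℕ → ℝ) (q2 : ℕ → ℝ) : Prop :=
  ∀ n ∈ Icc 1 N2,
    δt2 * uC I J xh p2 q2 n I = ∑ k ∈ Icc 1 K, δt1 * uF I xh p1 q1 n k I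
    ∧ ∀ k ∈ Icc 1 K, q1 n k = q2 n


lemma tsum0 (g : ℕ → ℝ) (N : ℕ) :
    ∑ n ∈ Icc 1 N, (g n - g (n - 1)) = g N - g 0 := by
  induction N with
  | zero => simp
  | succ N ih =>
    rw [Finset.sum_Icc_succ_top (by omega), ih]
    simp

lemma tele (a : ℕ → ℝ) (N : ℕ) :
    ∑ t ∈ Icc 1 N, a t * (a t - a (t - 1))
      = (a N) ^ 2 / 2 - (a 0) ^ 2 / 2 + ∑ t ∈ Icc 1 N, (a t - a (t - 1)) ^ 2 / 2 := by
  induction N with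
  | zero => simp
  | succ N ih =>
    rw [Finset.sum_Icc_succ_top (by omega), Finset.sum_Icc_succ_top (a := 1) (by omega), ih]
    simp only [Nat.add_sub_cancel]
    ring

lemma sbp (u p : ℕ → ℝ) (a b : ℕ) (hab : a < b) :
    ∑ j ∈ Icc (a + 1) b, (u j - u (j - 1)) * p j
      = u b * p b - u a * p (a + 1) - ∑ j ∈ Icc (a + 1) (b - 1), u j * (p (j + 1) - p j) := by
  induction b with
  | zero => omega
  | succ b ih =>
    rcases Nat.lt_or_ge a b with h | h
    · rw [Finset.sum_Icc_succ_top (by omega), ih h]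
      have hb : b + 1 - 1 = b := rfl
      rw [hb]
      have : (b - 1) + 1 = b := by omega
      rw [← this, Finset.sum_Icc_succ_top (by omega), this]
      ring
    · have hb : b = a := by omega
      subst hb
      simp [Finset.sum_Icc_succ_top]
      ring

lemma sum_Icc_bot (F : ℕ → ℝ) (a b : ℕ) (h : a ≤ b) :
    ∑ j ∈ Icc a b, F j = F a + ∑ j ∈ Icc (a + 1) b, F j := by
  have : Icc a b = insert a (Icc (a + 1) b) := by
    ext j; simp only [Finset.mem_Icc, Finset.mem_insert]; omega
  rw [this, Finset.sum_insert (by simp)]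

lemma sum_Icc_top (F : ℕ → ℝ) (a b : ℕ) (h : a ≤ b) (h1 : 1 ≤ a) :
    ∑ j ∈ Icc a b, F j = ∑ j ∈ Icc a (b - 1), F j + F b := by
  cases b with
  | zero => omega
  | succ b =>
    rcases Nat.lt_or_ge b a with hb | hb
    · have : a = b + 1 := by omega
      subst this
      rw [Finset.Icc_self, Finset.sum_singleton, show b + 1 - 1 = b from rfl,
        Finset.Icc_eq_empty (by omega), Finset.sum_empty]
      ring
    · rw [Finset.sum_Icc_succ_top (by omega)]
      simp

lemma xh_mono (J : ℕ) (xh : ℕ → ℝ) (hxmono : ∀ j < J, xh j < xh (j + 1))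
    {a b : ℕ} (hab : a < b) (hb : b ≤ J) : xh a < xh b := by
  induction b with
  | zero => omega
  | succ b ih =>
    rcases Nat.lt_or_ge a b with h | h
    · exact lt_trans (ih h (by omega)) (hxmono b (by omega))
    · have : a = b := by omega
      subst this; exact hxmono a (by omega)
set_option maxHeartbeats 1000000 in
lemma hom_zero (J I K N2 : ℕ) (hI1 : 1 ≤ I) (hIJ : I < J) (hK : 1 ≤ K) (hN2 : 1 ≤ N2)
    (δt1 : ℝ) (hδt1 : 0 < δt1) (δt2 : ℝ) (hδt2 : δt2 = (K : ℝ) * δt1)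
    (xh : ℕ → ℝ) (hxmono : ∀ j < J, xh j < xh (j + 1))
    (p1 : ℕ → ℕ → ℕ → ℝ) (p2 : ℕ → ℕ → ℝ) (q1 : ℕ → ℕ → ℝ) (q2 : ℕ → ℝ)
    (hS : SchemeEqs J I K N2 δt1 δt2 xh (fun _ => 0) (fun _ _ _ => 0) (fun _ _ => 0) p1 p2 q1 q2)
    (hIF : InterfaceCoarseFlux J I K N2 δt1 δt2 xh p1 p2 q1 q2) :
    ∀ n ∈ Icc 1 N2, (∀ k ∈ Icc 1 K, (∀ j ∈ Icc 1 I, p1 n k j = 0) ∧ q1 n k = 0)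
      ∧ (∀ j ∈ Icc (I + 1) J, p2 n j = 0) ∧ q2 n = 0 := by
  obtain ⟨hF, hC⟩ := hS
  have hKpos : (0 : ℝ) < K := by exact_mod_cast hK
  have hδt2pos : 0 < δt2 := by rw [hδt2]; exact mul_pos hKpos hδt1
  have hδne : δt1 ≠ 0 := ne_of_gt hδt1
  have hδ2ne : δt2 ≠ 0 := ne_of_gt hδt2pos
  set u := uF I xh p1 q1 with hu
  set U := uC I J xh p2 q2 with hU
  set WF : ℕ → ℝ := fun j => if j = 0 then xc xh 1 - xh 0
    else if j < I then xc xh (j + 1) - xc xh j else xh I - xc xh I with hWF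
  set WC : ℕ → ℝ := fun j => if j = J then xh J - xc xh J
    else if I < j then xc xh (j + 1) - xc xh j else xc xh (I + 1) - xh I with hWC
  have hwpos : ∀ j, 1 ≤ j → j ≤ J → 0 < hw xh j := by
    intro j h1 h2
    have := xh_mono J xh hxmono (show j - 1 < j by omega) h2
    unfold hw; linarith
  have hWFpos : ∀ j ≤ I, 0 < WF j := by
    intro j hj
    simp only [hWF]
    split_ifs with h0 hlt
    · have := hxmono 0 (by omega)
      unfold xc; norm_num; linarith
    · have := xh_mono J xh hxmono (show j - 1 < j + 1 by omega) (by omega)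
      unfold xc
      rw [show j + 1 - 1 = j from rfl]
      linarith
    · have := xh_mono J xh hxmono (show I - 1 < I by omega) (by omega)
      unfold xc; linarith
  have hWCpos : ∀ j, I ≤ j → j ≤ J → 0 < WC j := by
    intro j hjI hjJ
    simp only [hWC]
    split_ifs with h0 hlt
    · have := xh_mono J xh hxmono (show J - 1 < J by omega) (by omega)
      unfold xc; linarith
    · have := xh_mono J xh hxmono (show j - 1 < j + 1 by omega) (by omega)
      unfold xc
      rw [show j + 1 - 1 = j from rfl]
      linarith
    · have := xh_mono J xh hxmono (show I < I + 1 by omega) (by omega)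
      unfold xc
      rw [show I + 1 - 1 = I from rfl]
      linarith
  -- flux-numerator relations
  have hp11 : ∀ n k, p1 n k 1 = WF 0 * u n k 0 := by
    intro n k
    have hne : WF 0 ≠ 0 := ne_of_gt (hWFpos 0 (by omega))
    simp only [hWF, if_pos rfl] at hne ⊢
    simp only [hu, uF, if_pos rfl, ↓reduceIte]
    field_simp
  have hmid : ∀ n k j, 1 ≤ j → j < I → p1 n k (j + 1) - p1 n k j = WF j * u n k j := by
    intro n k j h1 h2
    have hne : WF j ≠ 0 := ne_of_gt (hWFpos j (by omega))
    simp only [hWF, if_neg (by omega : ¬ j = 0), if_pos h2] at hne ⊢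
    simp only [hu, uF, if_neg (by omega : ¬ j = 0), if_pos h2]
    field_simp
  have hqI : ∀ n k, q1 n k - p1 n k I = WF I * u n k I := by
    intro n k
    have hne : WF I ≠ 0 := ne_of_gt (hWFpos I le_rfl)
    simp only [hWF, if_neg (by omega : ¬ I = 0), if_neg (lt_irrefl I)] at hne ⊢
    simp only [hu, uF, if_neg (by omega : ¬ I = 0), if_neg (lt_irrefl I)]
    field_simp
  have hc_top : ∀ n, p2 n J = -(WC J * U n J) := by
    intro n
    have hne : WC J ≠ 0 := ne_of_gt (hWCpos J (by omega) le_rfl)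
    simp only [hWC, if_pos rfl] at hne ⊢
    simp only [hU, uC, if_pos rfl, ↓reduceIte]
    field_simp
  have hc_mid : ∀ n j, I < j → j < J → p2 n (j + 1) - p2 n j = WC j * U n j := by
    intro n j h1 h2
    have hne : WC j ≠ 0 := ne_of_gt (hWCpos j (by omega) (by omega))
    simp only [hWC, if_neg (by omega : ¬ j = J), if_pos h1] at hne ⊢
    simp only [hU, uC, if_neg (by omega : ¬ j = J), if_pos h1]
    field_simp
  have hc_int : ∀ n, p2 n (I + 1) - q2 n = WC I * U n I := by
    intro n
    have hne : WC I ≠ 0 := ne_of_gt (hWCpos I le_rfl (by omega))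
    simp only [hWC, if_neg (by omega : ¬ I = J), if_neg (lt_irrefl I)] at hne ⊢
    simp only [hU, uC, if_neg (by omega : ¬ I = J), if_neg (lt_irrefl I)]
    field_simp
  -- energy identity, fine side
  have idA : ∀ n ∈ Icc 1 N2, ∀ k ∈ Icc 1 K,
      (∑ j ∈ Icc 1 I, hw xh j * (p1 n k j * (p1 n k j - prevF K (fun _ => 0) p1 n k j)))
        + δt1 * ∑ j ∈ Icc 0 I, WF j * (u n k j) ^ 2
        = δt1 * (u n k I * q1 n k) := by
    intro n hn k hk
    have hstep : ∀ j ∈ Icc 1 I,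
        hw xh j * (p1 n k j * (p1 n k j - prevF K (fun _ => 0) p1 n k j))
          = δt1 * ((u n k j - u n k (j - 1)) * p1 n k j) := by
      intro j hj
      have h := hF n hn k hk j hj
      simp only [mul_zero] at h
      have h' : (hw xh j / δt1) * (p1 n k j - prevF K (fun _ => 0) p1 n k j)
          = u n k j - u n k (j - 1) := by linarith
      have h1 : hw xh j * (p1 n k j - prevF K (fun _ => 0) p1 n k j)
          = δt1 * (u n k j - u n k (j - 1)) := by
        rw [← h']; field_simp
      linear_combination p1 n k j * h1
    rw [Finset.sum_congr rfl hstep, ← Finset.mul_sum]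
    have hsbp := sbp (u n k) (p1 n k) 0 I (by omega)
    rw [hsbp]
    have hmid' : ∑ j ∈ Icc 1 (I - 1), u n k j * (p1 n k (j + 1) - p1 n k j)
        = ∑ j ∈ Icc 1 (I - 1), WF j * (u n k j) ^ 2 := by
      apply Finset.sum_congr rfl
      intro j hj
      simp only [Finset.mem_Icc] at hj
      rw [hmid n k j hj.1 (by omega)]
      ring
    rw [hmid']
    rw [sum_Icc_bot (fun j => WF j * (u n k j) ^ 2) 0 I (by omega),
      sum_Icc_top (fun j => WF j * (u n k j) ^ 2) 1 I hI1 le_rfl]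
    linear_combination (-(δt1 * u n k 0)) * hp11 n k + (-(δt1 * u n k I)) * hqI n k
  -- energy identity, coarse side
  have idB : ∀ n ∈ Icc 1 N2,
      (∑ j ∈ Icc (I + 1) J, hw xh j * (p2 n j * (p2 n j - prevC (fun _ => 0) p2 n j)))
        + δt2 * ∑ j ∈ Icc I J, WC j * (U n j) ^ 2
        = -(δt2 * (U n I * q2 n)) := by
    intro n hn
    have hstep : ∀ j ∈ Icc (I + 1) J,
        hw xh j * (p2 n j * (p2 n j - prevC (fun _ => 0) p2 n j))
          = δt2 * ((U n j - U n (j - 1)) * p2 n j) := by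
      intro j hj
      have h := hC n hn j hj
      simp only [mul_zero] at h
      have h' : (hw xh j / δt2) * (p2 n j - prevC (fun _ => 0) p2 n j)
          = U n j - U n (j - 1) := by linarith
      have h1 : hw xh j * (p2 n j - prevC (fun _ => 0) p2 n j)
          = δt2 * (U n j - U n (j - 1)) := by
        rw [← h']; field_simp
      linear_combination p2 n j * h1
    rw [Finset.sum_congr rfl hstep, ← Finset.mul_sum]
    have hsbp := sbp (U n) (p2 n) I J hIJ
    rw [hsbp]
    have hmid' : ∑ j ∈ Icc (I + 1) (J - 1), U n j * (p2 n (j + 1) - p2 n j)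
        = ∑ j ∈ Icc (I + 1) (J - 1), WC j * (U n j) ^ 2 := by
      apply Finset.sum_congr rfl
      intro j hj
      simp only [Finset.mem_Icc] at hj
      rw [hc_mid n j (by omega) (by omega)]
      ring
    rw [hmid']
    rw [sum_Icc_bot (fun j => WC j * (U n j) ^ 2) I J (by omega),
      sum_Icc_top (fun j => WC j * (U n j) ^ 2) (I + 1) J (by omega) (by omega)]
    linear_combination (δt2 * U n J) * hc_top n + (-(δt2 * U n I)) * hc_int n
  -- abbreviations
  set Sf : ℕ → ℕ → ℝ := fun n k =>
    ∑ j ∈ Icc 1 I, hw xh j * (p1 n k j * (p1 n k j - prevF K (fun _ => 0) p1 n k j)) with hSfd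
  set Qf : ℕ → ℕ → ℝ := fun n k => ∑ j ∈ Icc 0 I, WF j * (u n k j) ^ 2 with hQfd
  set Sc : ℕ → ℝ := fun n =>
    ∑ j ∈ Icc (I + 1) J, hw xh j * (p2 n j * (p2 n j - prevC (fun _ => 0) p2 n j)) with hScd
  set Qc : ℕ → ℝ := fun n => ∑ j ∈ Icc I J, WC j * (U n j) ^ 2 with hQcd
  -- total energy balance
  have per_n : ∀ n ∈ Icc 1 N2,
      (∑ k ∈ Icc 1 K, Sf n k) + Sc n + δt1 * (∑ k ∈ Icc 1 K, Qf n k) + δt2 * Qc n = 0 := by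
    intro n hn
    obtain ⟨hflux, hpress⟩ := hIF n hn
    have h1 : ∑ k ∈ Icc 1 K, (Sf n k + δt1 * Qf n k)
        = ∑ k ∈ Icc 1 K, δt1 * (u n k I * q1 n k) :=
      Finset.sum_congr rfl (fun k hk => idA n hn k hk)
    have h2 : ∑ k ∈ Icc 1 K, δt1 * (u n k I * q1 n k)
        = (∑ k ∈ Icc 1 K, δt1 * u n k I) * q2 n := by
      rw [Finset.sum_mul]
      apply Finset.sum_congr rfl
      intro k hk
      rw [hpress k hk]; ring
    have h4 : (∑ k ∈ Icc 1 K, Sf n k) + δt1 * (∑ k ∈ Icc 1 K, Qf n k)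
        = (δt2 * U n I) * q2 n := by
      rw [Finset.mul_sum, ← Finset.sum_add_distrib, h1, h2, ← hflux]
    linear_combination idB n hn + h4
  have hTOT : (∑ n ∈ Icc 1 N2, ∑ k ∈ Icc 1 K, Sf n k) + (∑ n ∈ Icc 1 N2, Sc n)
      + δt1 * (∑ n ∈ Icc 1 N2, ∑ k ∈ Icc 1 K, Qf n k)
      + δt2 * (∑ n ∈ Icc 1 N2, Qc n) = 0 := by
    have h := Finset.sum_eq_zero per_n
    simp only [Finset.sum_add_distrib, ← Finset.mul_sum] at h
    linear_combination h
  -- nonnegativity of the S-parts (telescoping in time)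
  have hSfnn : 0 ≤ ∑ n ∈ Icc 1 N2, ∑ k ∈ Icc 1 K, Sf n k := by
    have hswap : ∑ n ∈ Icc 1 N2, ∑ k ∈ Icc 1 K, Sf n k
        = ∑ j ∈ Icc 1 I, hw xh j * (∑ n ∈ Icc 1 N2, ∑ k ∈ Icc 1 K,
            p1 n k j * (p1 n k j - prevF K (fun _ => 0) p1 n k j)) := by
      simp only [hSfd]
      calc ∑ n ∈ Icc 1 N2, ∑ k ∈ Icc 1 K, ∑ j ∈ Icc 1 I,
              hw xh j * (p1 n k j * (p1 n k j - prevF K (fun _ => 0) p1 n k j))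
          = ∑ n ∈ Icc 1 N2, ∑ j ∈ Icc 1 I, ∑ k ∈ Icc 1 K,
              hw xh j * (p1 n k j * (p1 n k j - prevF K (fun _ => 0) p1 n k j)) :=
            Finset.sum_congr rfl (fun n _ => Finset.sum_comm)
        _ = ∑ j ∈ Icc 1 I, ∑ n ∈ Icc 1 N2, ∑ k ∈ Icc 1 K,
              hw xh j * (p1 n k j * (p1 n k j - prevF K (fun _ => 0) p1 n k j)) :=
            Finset.sum_comm
        _ = ∑ j ∈ Icc 1 I, hw xh j * (∑ n ∈ Icc 1 N2, ∑ k ∈ Icc 1 K,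
              p1 n k j * (p1 n k j - prevF K (fun _ => 0) p1 n k j)) := by
            apply Finset.sum_congr rfl
            intro j _
            rw [Finset.mul_sum]
            apply Finset.sum_congr rfl
            intro n _
            rw [Finset.mul_sum]
    rw [hswap]
    apply Finset.sum_nonneg
    intro j hj
    simp only [Finset.mem_Icc] at hj
    have hwj := hwpos j hj.1 (by omega)
    apply mul_nonneg hwj.le
    -- telescoping over (n,k)
    set c : ℕ → ℝ := fun m => if m = 0 then 0 else p1 m K j with hc
    have inner : ∀ n ∈ Icc 1 N2,
        (c n) ^ 2 / 2 - (c (n - 1)) ^ 2 / 2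
          ≤ ∑ k ∈ Icc 1 K, p1 n k j * (p1 n k j - prevF K (fun _ => 0) p1 n k j) := by
      intro n hn
      simp only [Finset.mem_Icc] at hn
      set a : ℕ → ℝ := fun k =>
        if k = 0 then (if n = 1 then 0 else p1 (n - 1) K j) else p1 n k j with ha
      have hcong : ∀ k ∈ Icc 1 K,
          p1 n k j * (p1 n k j - prevF K (fun _ => 0) p1 n k j)
            = a k * (a k - a (k - 1)) := by
        intro k hk
        simp only [Finset.mem_Icc] at hk
        have hk0 : a k = p1 n k j := by simp [ha, show ¬ k = 0 by omega]
        have hk1 : a (k - 1) = prevF K (fun _ => 0) p1 n k j := by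
          by_cases h1 : k = 1
          · subst h1; simp [ha, prevF]
          · simp [ha, prevF, h1, show ¬ (k - 1) = 0 by omega]
        rw [hk0, hk1]
      rw [Finset.sum_congr rfl hcong, tele a K]
      have haK : a K = c n := by
        simp [ha, hc, show ¬ K = 0 by omega, show ¬ n = 0 by omega]
      have ha0 : a 0 = c (n - 1) := by
        by_cases h1 : n = 1
        · simp [ha, hc, h1]
        · simp [ha, hc, h1, show ¬ (n - 1) = 0 by omega]
      rw [haK, ha0]
      have hnn : 0 ≤ ∑ t ∈ Icc 1 K, (a t - a (t - 1)) ^ 2 / 2 :=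
        Finset.sum_nonneg (fun t _ => by positivity)
      linarith
    have hsum := Finset.sum_le_sum inner
    have htel : ∑ n ∈ Icc 1 N2, ((c n) ^ 2 / 2 - (c (n - 1)) ^ 2 / 2)
        = (c N2) ^ 2 / 2 - (c 0) ^ 2 / 2 := tsum0 (fun m => (c m) ^ 2 / 2) N2
    rw [htel] at hsum
    have hc0 : c 0 = 0 := by simp [hc]
    rw [hc0] at hsum
    nlinarith [sq_nonneg (c N2)]
  have hScnn : 0 ≤ ∑ n ∈ Icc 1 N2, Sc n := by
    have hswap : ∑ n ∈ Icc 1 N2, Sc n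
        = ∑ j ∈ Icc (I + 1) J, hw xh j * (∑ n ∈ Icc 1 N2,
            p2 n j * (p2 n j - prevC (fun _ => 0) p2 n j)) := by
      simp only [hScd]
      rw [Finset.sum_comm]
      apply Finset.sum_congr rfl
      intro j _
      rw [Finset.mul_sum]
    rw [hswap]
    apply Finset.sum_nonneg
    intro j hj
    simp only [Finset.mem_Icc] at hj
    have hwj := hwpos j (by omega) hj.2
    apply mul_nonneg hwj.le
    set a : ℕ → ℝ := fun m => if m = 0 then 0 else p2 m j with ha
    have hcong : ∀ n ∈ Icc 1 N2,
        p2 n j * (p2 n j - prevC (fun _ => 0) p2 n j) = a n * (a n - a (n - 1)) := by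
      intro n hn
      simp only [Finset.mem_Icc] at hn
      have h0 : a n = p2 n j := by simp [ha, show ¬ n = 0 by omega]
      have h1 : a (n - 1) = prevC (fun _ => 0) p2 n j := by
        by_cases hn1 : n = 1
        · simp [ha, prevC, hn1]
        · simp [ha, prevC, hn1, show ¬ (n - 1) = 0 by omega]
      rw [h0, h1]
    rw [Finset.sum_congr rfl hcong, tele a N2]
    have ha0 : a 0 = 0 := by simp [ha]
    have hnn : 0 ≤ ∑ t ∈ Icc 1 N2, (a t - a (t - 1)) ^ 2 / 2 :=
      Finset.sum_nonneg (fun t _ => by positivity)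
    rw [ha0]
    nlinarith [sq_nonneg (a N2)]
  -- flux terms vanish
  have hQfnn : ∀ n k, 0 ≤ Qf n k := by
    intro n k
    apply Finset.sum_nonneg
    intro j hj
    simp only [Finset.mem_Icc] at hj
    have := hWFpos j hj.2
    positivity
  have hQcnn : ∀ n, 0 ≤ Qc n := by
    intro n
    apply Finset.sum_nonneg
    intro j hj
    simp only [Finset.mem_Icc] at hj
    have := hWCpos j hj.1 hj.2
    positivity
  have hQfsnn : 0 ≤ ∑ n ∈ Icc 1 N2, ∑ k ∈ Icc 1 K, Qf n k :=
    Finset.sum_nonneg fun n _ => Finset.sum_nonneg fun k _ => hQfnn n k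
  have hQcsnn : 0 ≤ ∑ n ∈ Icc 1 N2, Qc n := Finset.sum_nonneg fun n _ => hQcnn n
  have hQfs0 : ∑ n ∈ Icc 1 N2, ∑ k ∈ Icc 1 K, Qf n k = 0 := by
    have h1 : δt1 * (∑ n ∈ Icc 1 N2, ∑ k ∈ Icc 1 K, Qf n k) = 0 := by
      have := mul_nonneg hδt1.le hQfsnn
      have := mul_nonneg hδt2pos.le hQcsnn
      linarith
    rcases mul_eq_zero.mp h1 with h | h
    · exact absurd h hδne
    · exact h
  have hQcs0 : ∑ n ∈ Icc 1 N2, Qc n = 0 := by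
    have h1 : δt2 * (∑ n ∈ Icc 1 N2, Qc n) = 0 := by
      have := mul_nonneg hδt1.le hQfsnn
      have := mul_nonneg hδt2pos.le hQcsnn
      linarith
    rcases mul_eq_zero.mp h1 with h | h
    · exact absurd h hδ2ne
    · exact h
  have hQfz : ∀ n ∈ Icc 1 N2, ∀ k ∈ Icc 1 K, Qf n k = 0 := by
    intro n hn k hk
    have h1 := (Finset.sum_eq_zero_iff_of_nonneg
      (fun n _ => Finset.sum_nonneg fun k _ => hQfnn n k)).mp hQfs0 n hn
    exact (Finset.sum_eq_zero_iff_of_nonneg (fun k _ => hQfnn n k)).mp h1 k hk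
  have hQcz : ∀ n ∈ Icc 1 N2, Qc n = 0 :=
    (Finset.sum_eq_zero_iff_of_nonneg (fun n _ => hQcnn n)).mp hQcs0
  have huz : ∀ n ∈ Icc 1 N2, ∀ k ∈ Icc 1 K, ∀ j ≤ I, u n k j = 0 := by
    intro n hn k hk j hj
    have h1 := (Finset.sum_eq_zero_iff_of_nonneg (fun j hj => by
        simp only [Finset.mem_Icc] at hj
        have := hWFpos j hj.2
        positivity)).mp (hQfz n hn k hk) j (Finset.mem_Icc.mpr ⟨Nat.zero_le j, hj⟩)
    have hW := hWFpos j hj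
    have h2 : u n k j ^ 2 = 0 := by
      rcases mul_eq_zero.mp h1 with h | h
      · exact absurd h (ne_of_gt hW)
      · exact h
    nlinarith [sq_nonneg (u n k j)]
  have hUz : ∀ n ∈ Icc 1 N2, ∀ j, I ≤ j → j ≤ J → U n j = 0 := by
    intro n hn j hjI hjJ
    have h1 := (Finset.sum_eq_zero_iff_of_nonneg (fun j hj => by
        simp only [Finset.mem_Icc] at hj
        have := hWCpos j hj.1 hj.2
        positivity)).mp (hQcz n hn) j (Finset.mem_Icc.mpr ⟨hjI, hjJ⟩)
    have hW := hWCpos j hjI hjJ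
    have h2 : U n j ^ 2 = 0 := by
      rcases mul_eq_zero.mp h1 with h | h
      · exact absurd h (ne_of_gt hW)
      · exact h
    nlinarith [sq_nonneg (U n j)]
  -- conclude
  intro n hn
  have hfine : ∀ k ∈ Icc 1 K, (∀ j ∈ Icc 1 I, p1 n k j = 0) ∧ q1 n k = 0 := by
    intro k hk
    have hall : ∀ j, 1 ≤ j → j ≤ I → p1 n k j = 0 := by
      intro j
      induction j with
      | zero => omega
      | succ j ih =>
        intro h1 h2
        by_cases hj0 : j = 0
        · subst hj0
          rw [hp11 n k, huz n hn k hk 0 (by omega), mul_zero]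
        · have hm := hmid n k j (by omega) (by omega)
          rw [huz n hn k hk j (by omega), mul_zero] at hm
          have := ih (by omega) (by omega)
          linarith
    have hq : q1 n k = 0 := by
      have h := hqI n k
      rw [huz n hn k hk I le_rfl, mul_zero] at h
      have := hall I hI1 le_rfl
      linarith
    exact ⟨fun j hj => by
      simp only [Finset.mem_Icc] at hj
      exact hall j hj.1 hj.2, hq⟩
  have hq2 : q2 n = 0 := by
    have h := (hIF n hn).2 1 (Finset.mem_Icc.mpr ⟨le_rfl, hK⟩)
    rw [← h]
    exact (hfine 1 (Finset.mem_Icc.mpr ⟨le_rfl, hK⟩)).2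
  have hcoarse : ∀ j, I + 1 ≤ j → j ≤ J → p2 n j = 0 := by
    intro j
    induction j with
    | zero => omega
    | succ j ih =>
      intro h1 h2
      by_cases hjI : j = I
      · subst hjI
        have h := hc_int n
        rw [hUz n hn j le_rfl (by omega), mul_zero, hq2] at h
        linarith
      · have hm := hc_mid n j (by omega) (by omega)
        rw [hUz n hn j (by omega) (by omega), mul_zero] at hm
        have := ih (by omega) (by omega)
        linarith
  exact ⟨hfine, fun j hj => by
    simp only [Finset.mem_Icc] at hj
    exact hcoarse j hj.1 hj.2, hq2⟩
-- difference lemmas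
lemma uF_sub (I : ℕ) (xh : ℕ → ℝ) (p1 p1' : ℕ → ℕ → ℕ → ℝ) (q1 q1' : ℕ → ℕ → ℝ) (n k j : ℕ) :
    uF I xh (fun n k j => p1 n k j - p1' n k j) (fun n k => q1 n k - q1' n k) n k j
      = uF I xh p1 q1 n k j - uF I xh p1' q1' n k j := by
  unfold uF; split_ifs <;> ring

lemma uC_sub (I J : ℕ) (xh : ℕ → ℝ) (p2 p2' : ℕ → ℕ → ℝ) (q2 q2' : ℕ → ℝ) (n j : ℕ) :
    uC I J xh (fun n j => p2 n j - p2' n j) (fun n => q2 n - q2' n) n j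
      = uC I J xh p2 q2 n j - uC I J xh p2' q2' n j := by
  unfold uC; split_ifs <;> ring

lemma prevF_sub (K : ℕ) (p0 : ℕ → ℝ) (p1 p1' : ℕ → ℕ → ℕ → ℝ) (n k j : ℕ) :
    prevF K (fun _ => 0) (fun n k j => p1 n k j - p1' n k j) n k j
      = prevF K p0 p1 n k j - prevF K p0 p1' n k j := by
  unfold prevF; split_ifs <;> simp

lemma prevC_sub (p0 : ℕ → ℝ) (p2 p2' : ℕ → ℕ → ℝ) (n j : ℕ) :
    prevC (fun _ => 0) (fun n j => p2 n j - p2' n j) n j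
      = prevC p0 p2 n j - prevC p0 p2' n j := by
  unfold prevC; split_ifs <;> simp

-- the finite-dimensional unknown space
abbrev Vec (J I K N2 : ℕ) : Type :=
  (Fin N2 → Fin K → Fin I → ℝ) × (Fin N2 → Fin (J - I) → ℝ) × (Fin N2 → Fin K → ℝ) × (Fin N2 → ℝ)

noncomputable def dec1 (J I K N2 : ℕ) (v : Vec J I K N2) : ℕ → ℕ → ℕ → ℝ := fun n k j =>
  if h : 1 ≤ n ∧ n ≤ N2 ∧ 1 ≤ k ∧ k ≤ K ∧ 1 ≤ j ∧ j ≤ I then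
    v.1 ⟨n - 1, by omega⟩ ⟨k - 1, by omega⟩ ⟨j - 1, by omega⟩ else 0

noncomputable def dec2 (J I K N2 : ℕ) (v : Vec J I K N2) : ℕ → ℕ → ℝ := fun n j =>
  if h : 1 ≤ n ∧ n ≤ N2 ∧ I + 1 ≤ j ∧ j ≤ J then
    v.2.1 ⟨n - 1, by omega⟩ ⟨j - I - 1, by omega⟩ else 0

noncomputable def decq1 (J I K N2 : ℕ) (v : Vec J I K N2) : ℕ → ℕ → ℝ := fun n k =>
  if h : 1 ≤ n ∧ n ≤ N2 ∧ 1 ≤ k ∧ k ≤ K then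
    v.2.2.1 ⟨n - 1, by omega⟩ ⟨k - 1, by omega⟩ else 0

noncomputable def decq2 (J I K N2 : ℕ) (v : Vec J I K N2) : ℕ → ℝ := fun n =>
  if h : 1 ≤ n ∧ n ≤ N2 then v.2.2.2 ⟨n - 1, by omega⟩ else 0

noncomputable def fineRes (I K : ℕ) (δt1 : ℝ) (xh : ℕ → ℝ)
    (p1 : ℕ → ℕ → ℕ → ℝ) (q1 : ℕ → ℕ → ℝ) (n k j : ℕ) : ℝ :=
  (hw xh j / δt1) * (p1 n k j - prevF K (fun _ => 0) p1 n k j)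
    - (uF I xh p1 q1 n k j - uF I xh p1 q1 n k (j - 1))

noncomputable def coarseRes (I J : ℕ) (δt2 : ℝ) (xh : ℕ → ℝ)
    (p2 : ℕ → ℕ → ℝ) (q2 : ℕ → ℝ) (n j : ℕ) : ℝ :=
  (hw xh j / δt2) * (p2 n j - prevC (fun _ => 0) p2 n j)
    - (uC I J xh p2 q2 n j - uC I J xh p2 q2 n (j - 1))

noncomputable def Rmap (J I K N2 : ℕ) (δt1 δt2 : ℝ) (xh : ℕ → ℝ) (v : Vec J I K N2) :
    Vec J I K N2 :=
  (fun n k j => fineRes I K δt1 xh (dec1 J I K N2 v) (decq1 J I K N2 v)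
      ((n : ℕ) + 1) ((k : ℕ) + 1) ((j : ℕ) + 1),
   fun n j => coarseRes I J δt2 xh (dec2 J I K N2 v) (decq2 J I K N2 v)
      ((n : ℕ) + 1) (I + 1 + (j : ℕ)),
   fun n k => decq1 J I K N2 v ((n : ℕ) + 1) ((k : ℕ) + 1) - decq2 J I K N2 v ((n : ℕ) + 1),
   fun n => δt2 * uC I J xh (dec2 J I K N2 v) (decq2 J I K N2 v) ((n : ℕ) + 1) I
     - ∑ k ∈ Icc 1 K, δt1 * uF I xh (dec1 J I K N2 v) (decq1 J I K N2 v) ((n : ℕ) + 1) k I)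
lemma uF_add (I : ℕ) (xh : ℕ → ℝ) (p1 p1' : ℕ → ℕ → ℕ → ℝ) (q1 q1' : ℕ → ℕ → ℝ) (n k j : ℕ) :
    uF I xh (fun n k j => p1 n k j + p1' n k j) (fun n k => q1 n k + q1' n k) n k j
      = uF I xh p1 q1 n k j + uF I xh p1' q1' n k j := by
  unfold uF; split_ifs <;> ring

lemma uF_smul (I : ℕ) (xh : ℕ → ℝ) (c : ℝ) (p1 : ℕ → ℕ → ℕ → ℝ) (q1 : ℕ → ℕ → ℝ) (n k j : ℕ) :
    uF I xh (fun n k j => c * p1 n k j) (fun n k => c * q1 n k) n k j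
      = c * uF I xh p1 q1 n k j := by
  unfold uF; split_ifs <;> ring

lemma uC_add (I J : ℕ) (xh : ℕ → ℝ) (p2 p2' : ℕ → ℕ → ℝ) (q2 q2' : ℕ → ℝ) (n j : ℕ) :
    uC I J xh (fun n j => p2 n j + p2' n j) (fun n => q2 n + q2' n) n j
      = uC I J xh p2 q2 n j + uC I J xh p2' q2' n j := by
  unfold uC; split_ifs <;> ring

lemma uC_smul (I J : ℕ) (xh : ℕ → ℝ) (c : ℝ) (p2 : ℕ → ℕ → ℝ) (q2 : ℕ → ℝ) (n j : ℕ) :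
    uC I J xh (fun n j => c * p2 n j) (fun n => c * q2 n) n j = c * uC I J xh p2 q2 n j := by
  unfold uC; split_ifs <;> ring

lemma fineRes_add (I K : ℕ) (δt1 : ℝ) (xh : ℕ → ℝ) (p1 p1' : ℕ → ℕ → ℕ → ℝ)
    (q1 q1' : ℕ → ℕ → ℝ) (n k j : ℕ) :
    fineRes I K δt1 xh (fun n k j => p1 n k j + p1' n k j) (fun n k => q1 n k + q1' n k) n k j
      = fineRes I K δt1 xh p1 q1 n k j + fineRes I K δt1 xh p1' q1' n k j := by
  unfold fineRes
  rw [uF_add, uF_add]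
  have h : prevF K (fun _ => 0) (fun n k j => p1 n k j + p1' n k j) n k j
      = prevF K (fun _ => 0) p1 n k j + prevF K (fun _ => 0) p1' n k j := by
    unfold prevF; split_ifs <;> simp
  rw [h]; ring

lemma fineRes_smul (I K : ℕ) (δt1 : ℝ) (xh : ℕ → ℝ) (c : ℝ) (p1 : ℕ → ℕ → ℕ → ℝ)
    (q1 : ℕ → ℕ → ℝ) (n k j : ℕ) :
    fineRes I K δt1 xh (fun n k j => c * p1 n k j) (fun n k => c * q1 n k) n k j
      = c * fineRes I K δt1 xh p1 q1 n k j := by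
  unfold fineRes
  rw [uF_smul, uF_smul]
  have h : prevF K (fun _ => 0) (fun n k j => c * p1 n k j) n k j
      = c * prevF K (fun _ => 0) p1 n k j := by
    unfold prevF; split_ifs <;> simp
  rw [h]; ring

lemma coarseRes_add (I J : ℕ) (δt2 : ℝ) (xh : ℕ → ℝ) (p2 p2' : ℕ → ℕ → ℝ)
    (q2 q2' : ℕ → ℝ) (n j : ℕ) :
    coarseRes I J δt2 xh (fun n j => p2 n j + p2' n j) (fun n => q2 n + q2' n) n j
      = coarseRes I J δt2 xh p2 q2 n j + coarseRes I J δt2 xh p2' q2' n j := by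
  unfold coarseRes
  rw [uC_add, uC_add]
  have h : prevC (fun _ => 0) (fun n j => p2 n j + p2' n j) n j
      = prevC (fun _ => 0) p2 n j + prevC (fun _ => 0) p2' n j := by
    unfold prevC; split_ifs <;> simp
  rw [h]; ring

lemma coarseRes_smul (I J : ℕ) (δt2 : ℝ) (xh : ℕ → ℝ) (c : ℝ) (p2 : ℕ → ℕ → ℝ)
    (q2 : ℕ → ℝ) (n j : ℕ) :
    coarseRes I J δt2 xh (fun n j => c * p2 n j) (fun n => c * q2 n) n j
      = c * coarseRes I J δt2 xh p2 q2 n j := by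
  unfold coarseRes
  rw [uC_smul, uC_smul]
  have h : prevC (fun _ => 0) (fun n j => c * p2 n j) n j = c * prevC (fun _ => 0) p2 n j := by
    unfold prevC; split_ifs <;> simp
  rw [h]; ring

lemma dec1_add (J I K N2 : ℕ) (v w : Vec J I K N2) :
    dec1 J I K N2 (v + w) = fun n k j => dec1 J I K N2 v n k j + dec1 J I K N2 w n k j := by
  funext n k j; unfold dec1; split_ifs <;> simp

lemma dec2_add (J I K N2 : ℕ) (v w : Vec J I K N2) :
    dec2 J I K N2 (v + w) = fun n j => dec2 J I K N2 v n j + dec2 J I K N2 w n j := by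
  funext n j; unfold dec2; split_ifs <;> simp

lemma decq1_add (J I K N2 : ℕ) (v w : Vec J I K N2) :
    decq1 J I K N2 (v + w) = fun n k => decq1 J I K N2 v n k + decq1 J I K N2 w n k := by
  funext n k; unfold decq1; split_ifs <;> simp

lemma decq2_add (J I K N2 : ℕ) (v w : Vec J I K N2) :
    decq2 J I K N2 (v + w) = fun n => decq2 J I K N2 v n + decq2 J I K N2 w n := by
  funext n; unfold decq2; split_ifs <;> simp

lemma dec1_smul (J I K N2 : ℕ) (c : ℝ) (v : Vec J I K N2) :
    dec1 J I K N2 (c • v) = fun n k j => c * dec1 J I K N2 v n k j := by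
  funext n k j; unfold dec1; split_ifs <;> simp

lemma dec2_smul (J I K N2 : ℕ) (c : ℝ) (v : Vec J I K N2) :
    dec2 J I K N2 (c • v) = fun n j => c * dec2 J I K N2 v n j := by
  funext n j; unfold dec2; split_ifs <;> simp

lemma decq1_smul (J I K N2 : ℕ) (c : ℝ) (v : Vec J I K N2) :
    decq1 J I K N2 (c • v) = fun n k => c * decq1 J I K N2 v n k := by
  funext n k; unfold decq1; split_ifs <;> simp

lemma decq2_smul (J I K N2 : ℕ) (c : ℝ) (v : Vec J I K N2) :
    decq2 J I K N2 (c • v) = fun n => c * decq2 J I K N2 v n := by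
  funext n; unfold decq2; split_ifs <;> simp

lemma Rmap_add (J I K N2 : ℕ) (δt1 δt2 : ℝ) (xh : ℕ → ℝ) (v w : Vec J I K N2) :
    Rmap J I K N2 δt1 δt2 xh (v + w)
      = Rmap J I K N2 δt1 δt2 xh v + Rmap J I K N2 δt1 δt2 xh w := by
  unfold Rmap
  rw [dec1_add, dec2_add, decq1_add, decq2_add]
  refine Prod.ext ?_ (Prod.ext ?_ (Prod.ext ?_ ?_))
  · funext n k j
    simp only [Prod.fst_add, Pi.add_apply]
    exact fineRes_add _ _ _ _ _ _ _ _ _ _ _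
  · funext n j
    simp only [Prod.snd_add, Prod.fst_add, Pi.add_apply]
    exact coarseRes_add _ _ _ _ _ _ _ _ _ _
  · funext n k
    simp only [Prod.snd_add, Prod.fst_add, Pi.add_apply]
    ring
  · funext n
    simp only [Prod.snd_add, Pi.add_apply]
    rw [uC_add]
    have h : ∀ k, δt1 * uF I xh
          (fun n k j => dec1 J I K N2 v n k j + dec1 J I K N2 w n k j)
          (fun n k => decq1 J I K N2 v n k + decq1 J I K N2 w n k) ((n : ℕ) + 1) k I
        = δt1 * uF I xh (dec1 J I K N2 v) (decq1 J I K N2 v) ((n : ℕ) + 1) k I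
          + δt1 * uF I xh (dec1 J I K N2 w) (decq1 J I K N2 w) ((n : ℕ) + 1) k I := by
      intro k; rw [uF_add]; ring
    rw [Finset.sum_congr rfl (fun k _ => h k), Finset.sum_add_distrib]
    ring

lemma Rmap_smul (J I K N2 : ℕ) (δt1 δt2 : ℝ) (xh : ℕ → ℝ) (c : ℝ) (v : Vec J I K N2) :
    Rmap J I K N2 δt1 δt2 xh (c • v) = c • Rmap J I K N2 δt1 δt2 xh v := by
  unfold Rmap
  rw [dec1_smul, dec2_smul, decq1_smul, decq2_smul]
  refine Prod.ext ?_ (Prod.ext ?_ (Prod.ext ?_ ?_))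
  · funext n k j
    simp only [Prod.smul_fst, Pi.smul_apply, smul_eq_mul]
    exact fineRes_smul _ _ _ _ _ _ _ _ _ _
  · funext n j
    simp only [Prod.smul_snd, Prod.smul_fst, Pi.smul_apply, smul_eq_mul]
    exact coarseRes_smul _ _ _ _ _ _ _ _ _
  · funext n k
    simp only [Prod.smul_snd, Prod.smul_fst, Pi.smul_apply, smul_eq_mul]
    ring
  · funext n
    simp only [Prod.smul_snd, Pi.smul_apply, smul_eq_mul]
    rw [uC_smul]
    have h : ∀ k, δt1 * uF I xh
          (fun n k j => c * dec1 J I K N2 v n k j)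
          (fun n k => c * decq1 J I K N2 v n k) ((n : ℕ) + 1) k I
        = c * (δt1 * uF I xh (dec1 J I K N2 v) (decq1 J I K N2 v) ((n : ℕ) + 1) k I) := by
      intro k; rw [uF_smul]; ring
    rw [Finset.sum_congr rfl (fun k _ => h k), ← Finset.mul_sum]
    ring

noncomputable def Lmap (J I K N2 : ℕ) (δt1 δt2 : ℝ) (xh : ℕ → ℝ) :
    Vec J I K N2 →ₗ[ℝ] Vec J I K N2 :=
  IsLinearMap.mk' (Rmap J I K N2 δt1 δt2 xh)
    ⟨Rmap_add J I K N2 δt1 δt2 xh, Rmap_smul J I K N2 δt1 δt2 xh⟩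
set_option maxHeartbeats 1000000 in
lemma Lmap_inj (J I K N2 : ℕ) (hI1 : 1 ≤ I) (hIJ : I < J) (hK : 1 ≤ K) (hN2 : 1 ≤ N2)
    (δt1 : ℝ) (hδt1 : 0 < δt1) (δt2 : ℝ) (hδt2 : δt2 = (K : ℝ) * δt1)
    (xh : ℕ → ℝ) (hxmono : ∀ j < J, xh j < xh (j + 1)) :
    Function.Injective (Lmap J I K N2 δt1 δt2 xh) := by
  rw [injective_iff_map_eq_zero]
  intro v hv
  have hv' : Rmap J I K N2 δt1 δt2 xh v = 0 := hv
  have hSch : SchemeEqs J I K N2 δt1 δt2 xh (fun _ => 0) (fun _ _ _ => 0) (fun _ _ => 0)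
      (dec1 J I K N2 v) (dec2 J I K N2 v) (decq1 J I K N2 v) (decq2 J I K N2 v) := by
    constructor
    · intro n hn k hk j hj
      simp only [Finset.mem_Icc] at hn hk hj
      have h := congrFun (congrFun (congrFun (congrArg (fun z => z.1) hv')
        (⟨n - 1, by omega⟩ : Fin N2)) (⟨k - 1, by omega⟩ : Fin K)) (⟨j - 1, by omega⟩ : Fin I)
      simp only [Rmap, Fin.val_mk, Prod.fst_zero, Pi.zero_apply] at h
      rw [Nat.sub_add_cancel hn.1, Nat.sub_add_cancel hk.1, Nat.sub_add_cancel hj.1] at h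
      unfold fineRes at h
      simpa using h
    · intro n hn j hj
      simp only [Finset.mem_Icc] at hn hj
      have h := congrFun (congrFun (congrArg (fun z => z.2.1) hv')
        (⟨n - 1, by omega⟩ : Fin N2)) (⟨j - I - 1, by omega⟩ : Fin (J - I))
      simp only [Rmap, Fin.val_mk, Prod.snd_zero, Prod.fst_zero, Pi.zero_apply] at h
      rw [Nat.sub_add_cancel hn.1, show I + 1 + (j - I - 1) = j by omega] at h
      unfold coarseRes at h
      simpa using h
  have hIFc : InterfaceCoarseFlux J I K N2 δt1 δt2 xh
      (dec1 J I K N2 v) (dec2 J I K N2 v) (decq1 J I K N2 v) (decq2 J I K N2 v) := by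
    intro n hn
    simp only [Finset.mem_Icc] at hn
    constructor
    · have h := congrFun (congrArg (fun z => z.2.2.2) hv') (⟨n - 1, by omega⟩ : Fin N2)
      simp only [Rmap, Fin.val_mk, Prod.snd_zero, Pi.zero_apply] at h
      rw [Nat.sub_add_cancel hn.1] at h
      linarith
    · intro k hk
      simp only [Finset.mem_Icc] at hk
      have h := congrFun (congrFun (congrArg (fun z => z.2.2.1) hv')
        (⟨n - 1, by omega⟩ : Fin N2)) (⟨k - 1, by omega⟩ : Fin K)
      simp only [Rmap, Fin.val_mk, Prod.snd_zero, Prod.fst_zero, Pi.zero_apply] at h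
      rw [Nat.sub_add_cancel hn.1, Nat.sub_add_cancel hk.1] at h
      linarith
  have hz := hom_zero J I K N2 hI1 hIJ hK hN2 δt1 hδt1 δt2 hδt2 xh hxmono
    (dec1 J I K N2 v) (dec2 J I K N2 v) (decq1 J I K N2 v) (decq2 J I K N2 v) hSch hIFc
  refine Prod.ext ?_ (Prod.ext ?_ (Prod.ext ?_ ?_))
  · funext n k j
    have hb1 := n.isLt; have hb2 := k.isLt; have hb3 := j.isLt
    show v.1 n k j = 0
    have h1 : dec1 J I K N2 v ((n : ℕ) + 1) ((k : ℕ) + 1) ((j : ℕ) + 1) = v.1 n k j := by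
      unfold dec1
      rw [dif_pos (by omega)]
      simp
    rw [← h1]
    exact ((hz ((n : ℕ) + 1) (Finset.mem_Icc.mpr (by omega))).1 ((k : ℕ) + 1)
      (Finset.mem_Icc.mpr (by omega))).1 ((j : ℕ) + 1) (Finset.mem_Icc.mpr (by omega))
  · funext n j
    have hb1 := n.isLt; have hb2 := j.isLt
    show v.2.1 n j = 0
    have h1 : dec2 J I K N2 v ((n : ℕ) + 1) (I + 1 + (j : ℕ)) = v.2.1 n j := by
      unfold dec2
      rw [dif_pos (by omega)]
      simp only [show (n : ℕ) + 1 - 1 = (n : ℕ) from rfl,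
        show I + 1 + (j : ℕ) - I - 1 = (j : ℕ) by omega, Fin.eta]
    rw [← h1]
    exact (hz ((n : ℕ) + 1) (Finset.mem_Icc.mpr (by omega))).2.1 (I + 1 + (j : ℕ))
      (Finset.mem_Icc.mpr (by omega))
  · funext n k
    have hb1 := n.isLt; have hb2 := k.isLt
    show v.2.2.1 n k = 0
    have h1 : decq1 J I K N2 v ((n : ℕ) + 1) ((k : ℕ) + 1) = v.2.2.1 n k := by
      unfold decq1
      rw [dif_pos (by omega)]
      simp
    rw [← h1]
    exact ((hz ((n : ℕ) + 1) (Finset.mem_Icc.mpr (by omega))).1 ((k : ℕ) + 1)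
      (Finset.mem_Icc.mpr (by omega))).2
  · funext n
    have hb1 := n.isLt
    show v.2.2.2 n = 0
    have h1 : decq2 J I K N2 v ((n : ℕ) + 1) = v.2.2.2 n := by
      unfold decq2
      rw [dif_pos (by omega)]
      simp
    rw [← h1]
    exact (hz ((n : ℕ) + 1) (Finset.mem_Icc.mpr (by omega))).2.2

lemma prevF_split (K : ℕ) (p0 : ℕ → ℝ) (p1 : ℕ → ℕ → ℕ → ℝ) (n k j : ℕ) :
    prevF K p0 p1 n k j
      = prevF K (fun _ => 0) p1 n k j + (if k = 1 ∧ n = 1 then p0 j else 0) := by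
  unfold prevF
  by_cases h1 : k = 1 <;> by_cases h2 : n = 1 <;> simp [h1, h2]

lemma prevC_split (p0 : ℕ → ℝ) (p2 : ℕ → ℕ → ℝ) (n j : ℕ) :
    prevC p0 p2 n j = prevC (fun _ => 0) p2 n j + (if n = 1 then p0 j else 0) := by
  unfold prevC; by_cases h : n = 1 <;> simp [h]


set_option maxHeartbeats 1000000 in
/-- Well-posedness with interface unknowns and coarse-flux/fine-pressure matching:
for every choice of sources and initial values, the resulting finite linear system has
exactly one solution `(p_j^{n,k}` for `j ≤ I`, `p_j^{n}` for `j > I`, `p_{I+1/2}^{n,k}`,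
`p_{I+1/2}^{n})`. -/
theorem wellposed_interface_unknowns_coarse_flux
    (J I K N2 : ℕ) (hJ : 3 ≤ J) (hI1 : 1 ≤ I) (hIJ : I < J) (hK : 1 ≤ K) (hN2 : 1 ≤ N2)
    (δt1 : ℝ) (hδt1 : 0 < δt1) (δt2 : ℝ) (hδt2 : δt2 = (K : ℝ) * δt1)
    (xh : ℕ → ℝ) (hx0 : xh 0 = 0) (hxmono : ∀ j < J, xh j < xh (j + 1))
    (p0 : ℕ → ℝ) (f1 : ℕ → ℕ → ℕ → ℝ) (f2 : ℕ → ℕ → ℝ) :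
    (∃ p1 p2 q1 q2,
        SchemeEqs J I K N2 δt1 δt2 xh p0 f1 f2 p1 p2 q1 q2
        ∧ InterfaceCoarseFlux J I K N2 δt1 δt2 xh p1 p2 q1 q2)
    ∧ ∀ p1 p2 q1 q2 p1' p2' q1' q2',
        SchemeEqs J I K N2 δt1 δt2 xh p0 f1 f2 p1 p2 q1 q2 →
        InterfaceCoarseFlux J I K N2 δt1 δt2 xh p1 p2 q1 q2 →
        SchemeEqs J I K N2 δt1 δt2 xh p0 f1 f2 p1' p2' q1' q2' →
        InterfaceCoarseFlux J I K N2 δt1 δt2 xh p1' p2' q1' q2' →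
        ∀ n ∈ Icc 1 N2,
          (∀ k ∈ Icc 1 K, (∀ j ∈ Icc 1 I, p1 n k j = p1' n k j) ∧ q1 n k = q1' n k)
          ∧ (∀ j ∈ Icc (I + 1) J, p2 n j = p2' n j) ∧ q2 n = q2' n := by
  constructor
  · -- existence
    have hsurj : Function.Surjective (Lmap J I K N2 δt1 δt2 xh) :=
      LinearMap.injective_iff_surjective.mp
        (Lmap_inj J I K N2 hI1 hIJ hK hN2 δt1 hδt1 δt2 hδt2 xh hxmono)
    obtain ⟨v, hv⟩ := hsurj
      ((fun n k j => hw xh ((j : ℕ) + 1) * f1 ((n : ℕ) + 1) ((k : ℕ) + 1) ((j : ℕ) + 1)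
          + (hw xh ((j : ℕ) + 1) / δt1)
            * (if (k : ℕ) + 1 = 1 ∧ (n : ℕ) + 1 = 1 then p0 ((j : ℕ) + 1) else 0),
        fun n j => hw xh (I + 1 + (j : ℕ)) * f2 ((n : ℕ) + 1) (I + 1 + (j : ℕ))
          + (hw xh (I + 1 + (j : ℕ)) / δt2)
            * (if (n : ℕ) + 1 = 1 then p0 (I + 1 + (j : ℕ)) else 0),
        fun _ _ => 0, fun _ => 0) : Vec J I K N2)
    have hv' : Rmap J I K N2 δt1 δt2 xh v = _ := hv
    refine ⟨dec1 J I K N2 v, dec2 J I K N2 v, decq1 J I K N2 v, decq2 J I K N2 v,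
      ⟨?_, ?_⟩, ?_⟩
    · intro n hn k hk j hj
      simp only [Finset.mem_Icc] at hn hk hj
      have h := congrFun (congrFun (congrFun (congrArg (fun z => z.1) hv')
        (⟨n - 1, by omega⟩ : Fin N2)) (⟨k - 1, by omega⟩ : Fin K)) (⟨j - 1, by omega⟩ : Fin I)
      simp only [Rmap, Fin.val_mk] at h
      rw [Nat.sub_add_cancel hn.1, Nat.sub_add_cancel hk.1, Nat.sub_add_cancel hj.1] at h
      unfold fineRes at h
      rw [prevF_split K p0 (dec1 J I K N2 v) n k j]
      linear_combination h
    · intro n hn j hj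
      simp only [Finset.mem_Icc] at hn hj
      have h := congrFun (congrFun (congrArg (fun z => z.2.1) hv')
        (⟨n - 1, by omega⟩ : Fin N2)) (⟨j - I - 1, by omega⟩ : Fin (J - I))
      simp only [Rmap, Fin.val_mk] at h
      rw [Nat.sub_add_cancel hn.1, show I + 1 + (j - I - 1) = j by omega] at h
      unfold coarseRes at h
      rw [prevC_split p0 (dec2 J I K N2 v) n j]
      linear_combination h
    · intro n hn
      simp only [Finset.mem_Icc] at hn
      constructor
      · have h := congrFun (congrArg (fun z => z.2.2.2) hv') (⟨n - 1, by omega⟩ : Fin N2)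
        simp only [Rmap, Fin.val_mk] at h
        rw [Nat.sub_add_cancel hn.1] at h
        linarith
      · intro k hk
        simp only [Finset.mem_Icc] at hk
        have h := congrFun (congrFun (congrArg (fun z => z.2.2.1) hv')
          (⟨n - 1, by omega⟩ : Fin N2)) (⟨k - 1, by omega⟩ : Fin K)
        simp only [Rmap, Fin.val_mk] at h
        rw [Nat.sub_add_cancel hn.1, Nat.sub_add_cancel hk.1] at h
        linarith
  · -- uniqueness
    intro p1 p2 q1 q2 p1' p2' q1' q2' hS hIF hS' hIF'
    have hSd : SchemeEqs J I K N2 δt1 δt2 xh (fun _ => 0) (fun _ _ _ => 0) (fun _ _ => 0)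
        (fun n k j => p1 n k j - p1' n k j) (fun n j => p2 n j - p2' n j)
        (fun n k => q1 n k - q1' n k) (fun n => q2 n - q2' n) := by
      constructor
      · intro n hn k hk j hj
        have h := hS.1 n hn k hk j hj
        have h' := hS'.1 n hn k hk j hj
        rw [uF_sub I xh p1 p1' q1 q1' n k j, uF_sub I xh p1 p1' q1 q1' n k (j - 1),
          prevF_sub K p0 p1 p1' n k j]
        beta_reduce
        linear_combination h - h'
      · intro n hn j hj
        have h := hS.2 n hn j hj
        have h' := hS'.2 n hn j hj
        rw [uC_sub I J xh p2 p2' q2 q2' n j, uC_sub I J xh p2 p2' q2 q2' n (j - 1),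
          prevC_sub p0 p2 p2' n j]
        beta_reduce
        linear_combination h - h'
    have hIFd : InterfaceCoarseFlux J I K N2 δt1 δt2 xh
        (fun n k j => p1 n k j - p1' n k j) (fun n j => p2 n j - p2' n j)
        (fun n k => q1 n k - q1' n k) (fun n => q2 n - q2' n) := by
      intro n hn
      obtain ⟨hfl, hpr⟩ := hIF n hn
      obtain ⟨hfl', hpr'⟩ := hIF' n hn
      constructor
      · rw [uC_sub I J xh p2 p2' q2 q2' n I]
        have hs : ∀ k ∈ Icc 1 K,
            δt1 * uF I xh (fun n k j => p1 n k j - p1' n k j)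
              (fun n k => q1 n k - q1' n k) n k I
            = δt1 * uF I xh p1 q1 n k I - δt1 * uF I xh p1' q1' n k I := by
          intro k _
          rw [uF_sub I xh p1 p1' q1 q1' n k I]; ring
        rw [Finset.sum_congr rfl hs, Finset.sum_sub_distrib]
        linear_combination hfl - hfl'
      · intro k hk
        beta_reduce
        rw [hpr k hk, hpr' k hk]
    have hz := hom_zero J I K N2 hI1 hIJ hK hN2 δt1 hδt1 δt2 hδt2 xh hxmono
      _ _ _ _ hSd hIFd
    intro n hn
    refine ⟨fun k hk => ⟨fun j hj => ?_, ?_⟩, fun j hj => ?_, ?_⟩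
    · have h := ((hz n hn).1 k hk).1 j hj
      linarith
    · have h := ((hz n hn).1 k hk).2
      linarith
    · have h := (hz n hn).2.1 j hj
      linarith
    · have h := (hz n hn).2.2
      linarith
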